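/- Let G be a torsion-free, locally nilpotent group with the Magnus property. Then G/Z(G) has the Magnus property. -/

import Mathlib

/-- Restored from older Mathlib: a monoid is torsion-free if every non-identity element has infinite order. -/
def Monoid.IsTorsionFree (G : Type*) [Monoid G] : Prop :=
  ∀ g : G, g ≠ 1 → ¬IsOfFinOrder g

def MagnusProperty (G : Type*) [Group G] : Prop :=
  ∀ g h : G, Subgroup.normalClosure {g} = Subgroup.normalClosure {h} →
    IsConj g h ∨ IsConj g h⁻¹


open Subgroup
open scoped commutatorElement

section Helpers

variable {K : Type*} [Group K]

/-- The normal closure of all commutators `⁅a, x⁆`. -/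
def MQ.CC (a : K) : Subgroup K := Subgroup.normalClosure {y | ∃ x, y = ⁅a, x⁆}

namespace MQ

instance CC_normal (a : K) : (CC a).Normal := Subgroup.normalClosure_normal

theorem commutator_mem_CC (a x : K) : ⁅a, x⁆ ∈ CC a :=
  Subgroup.subset_normalClosure ⟨x, rfl⟩

theorem commutator_mul_left (u v x : K) : ⁅u * v, x⁆ = u * ⁅v, x⁆ * u⁻¹ * ⁅u, x⁆ := by
  simp only [commutatorElement_def]; group

theorem commutator_inv_left (u x : K) : ⁅u⁻¹, x⁆ = u⁻¹ * ⁅u, x⁆⁻¹ * u := by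
  simp only [commutatorElement_def]; group

theorem commutator_one_left (x : K) : ⁅(1 : K), x⁆ = 1 := by
  simp only [commutatorElement_def]; group

theorem commutator_mul_central (u z x : K) (hz : ∀ g : K, g * z = z * g) :
    ⁅u * z, x⁆ = ⁅u, x⁆ := by
  have h1 : z * (x * z⁻¹) = x := by rw [← mul_assoc, ← hz x]; group
  calc ⁅u * z, x⁆ = u * (z * (x * z⁻¹)) * u⁻¹ * x⁻¹ := by
        simp only [commutatorElement_def]; group
    _ = u * x * u⁻¹ * x⁻¹ := by rw [h1]
    _ = ⁅u, x⁆ := by simp only [commutatorElement_def]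

theorem commutator_inv_mem_CC (a x : K) : ⁅a⁻¹, x⁆ ∈ CC a := by
  rw [commutator_inv_left]
  have := (CC_normal a).conj_mem _ (inv_mem (commutator_mem_CC a x)) a⁻¹
  simpa [mul_assoc] using this

theorem commutator_zpow_mem_CC (a : K) (k : ℤ) (x : K) : ⁅a ^ k, x⁆ ∈ CC a := by
  induction k using Int.induction_on with
  | zero => rw [zpow_zero, commutator_one_left]; exact one_mem _
  | succ k ih =>
      rw [zpow_add_one, commutator_mul_left]
      exact mul_mem ((CC_normal a).conj_mem _ (commutator_mem_CC a x) _) ih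
  | pred k ih =>
      rw [zpow_sub_one, commutator_mul_left]
      exact mul_mem ((CC_normal a).conj_mem _ (commutator_inv_mem_CC a x) _) ih

theorem commutator_mem_CC_of_mem {a c : K} (hc : c ∈ CC a) (x : K) : ⁅c, x⁆ ∈ CC a := by
  have : ⁅c, x⁆ = c * (x * c * x⁻¹)⁻¹ := by simp only [commutatorElement_def]; group
  rw [this]
  exact mul_mem hc (inv_mem ((CC_normal a).conj_mem _ hc x))

/-- If `b = a^k * c * z` with `c ∈ CC a` and `z` central, then `CC b ≤ CC a`. -/
theorem CC_le_of_eq {a b c z : K} (k : ℤ) (hc : c ∈ CC a) (hz : ∀ g : K, g * z = z * g)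
    (hb : b = a ^ k * c * z) : CC b ≤ CC a := by
  apply Subgroup.normalClosure_le_normal
  rintro y ⟨x, rfl⟩
  rw [hb, commutator_mul_central _ _ _ hz, commutator_mul_left]
  exact mul_mem ((CC_normal a).conj_mem _ (commutator_mem_CC_of_mem hc x) _)
    (commutator_zpow_mem_CC a k x)

theorem CC_shift_central (a z : K) (hz : ∀ g : K, g * z = z * g) : CC (a * z) = CC a := by
  unfold CC
  congr 1
  ext y
  constructor
  · rintro ⟨x, rfl⟩
    exact ⟨x, commutator_mul_central a z x hz⟩
  · rintro ⟨x, rfl⟩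
    exact ⟨x, (commutator_mul_central a z x hz).symm⟩

theorem pow_decomp (a c : K) (k : ℤ) (hc : c ∈ CC a) (l : ℤ) :
    ∃ d ∈ CC a, (a ^ k * c) ^ l = a ^ (k * l) * d := by
  induction l using Int.induction_on with
  | zero => exact ⟨1, one_mem _, by simp⟩
  | succ l ih =>
      obtain ⟨d, hd, heq⟩ := ih
      refine ⟨(a ^ k)⁻¹ * d * a ^ k * c, ?_, ?_⟩
      · exact mul_mem (by simpa [mul_assoc] using (CC_normal a).conj_mem _ hd (a ^ k)⁻¹) hc
      · have h1 : (a ^ k * c) ^ ((l : ℤ) + 1) = a ^ (k * l) * d * (a ^ k * c) := by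
          rw [zpow_add_one, heq]
        rw [h1]
        have h2 : k * ((l : ℤ) + 1) = k * l + k := by ring
        rw [h2, zpow_add]
        group
  | pred l ih =>
      obtain ⟨d, hd, heq⟩ := ih
      refine ⟨a ^ k * (d * c⁻¹) * (a ^ k)⁻¹, ?_, ?_⟩
      · exact (CC_normal a).conj_mem _ (mul_mem hd (inv_mem hc)) _
      · have h1 : (a ^ k * c) ^ (-(l : ℤ) - 1) = a ^ (k * (-l : ℤ)) * d * (a ^ k * c)⁻¹ := by
          rw [zpow_sub_one, heq]
        rw [h1]
        have h2 : k * (-(l : ℤ) - 1) = k * (-l : ℤ) + (-k) := by ring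
        rw [h2, zpow_add]
        group

/-- Any element of the normal closure of `{a}` has the form `a ^ k * c` with `c ∈ CC a`. -/
theorem mem_normalClosure_singleton {a u : K} (h : u ∈ Subgroup.normalClosure {a}) :
    ∃ (k : ℤ) (c : K), c ∈ CC a ∧ u = a ^ k * c := by
  let T : Subgroup K :=
    { carrier := {u | ∃ (k : ℤ) (c : K), c ∈ CC a ∧ u = a ^ k * c}
      one_mem' := ⟨0, 1, one_mem _, by simp⟩
      mul_mem' := by
        rintro u v ⟨k, c, hc, rfl⟩ ⟨j, d, hd, rfl⟩
        refine ⟨k + j, ((a ^ j)⁻¹ * c * a ^ j) * d, ?_, ?_⟩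
        · exact mul_mem (by simpa [mul_assoc] using (CC_normal a).conj_mem _ hc (a ^ j)⁻¹) hd
        · rw [zpow_add]; group
      inv_mem' := by
        rintro u ⟨k, c, hc, rfl⟩
        refine ⟨-k, a ^ k * c⁻¹ * (a ^ k)⁻¹, (CC_normal a).conj_mem _ (inv_mem hc) _, ?_⟩
        group }
  have hTnormal : T.Normal := by
    constructor
    rintro u ⟨k, c, hc, rfl⟩ t
    refine ⟨k, ⁅(a : K) ^ (-k : ℤ), t⁆ * (t * c * t⁻¹),
      mul_mem (commutator_zpow_mem_CC a (-k) t) ((CC_normal a).conj_mem _ hc t), ?_⟩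
    simp only [commutatorElement_def, zpow_neg]
    group
  have haT : ({a} : Set K) ⊆ T := by
    rintro x rfl
    exact ⟨1, 1, one_mem _, by simp⟩
  exact Subgroup.normalClosure_le_normal (N := T) haT h

theorem CC_le_normalClosure_singleton (a : K) :
    CC a ≤ Subgroup.normalClosure {a} := by
  have hN : (Subgroup.normalClosure ({a} : Set K)).Normal := Subgroup.normalClosure_normal
  apply Subgroup.normalClosure_le_normal
  rintro y ⟨x, rfl⟩
  have ha : a ∈ Subgroup.normalClosure ({a} : Set K) := subset_normalClosure rfl
  have h2 := hN.conj_mem _ ha x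
  have he : ⁅a, x⁆ = a * (x * a * x⁻¹)⁻¹ := by simp only [commutatorElement_def]; group
  rw [he]
  exact mul_mem ha (inv_mem h2)

theorem commutator_mem_normal {N : Subgroup K} (hN : N.Normal) {n : K} (hn : n ∈ N) (y : K) :
    ⁅n, y⁆ ∈ N := by
  have he : ⁅n, y⁆ = n * (y * n * y⁻¹)⁻¹ := by simp only [commutatorElement_def]; group
  rw [he]
  exact mul_mem hn (inv_mem (hN.conj_mem _ hn y))

theorem commutator_pow_left_of_central {u y : K} (m : ℕ)
    (h : ∀ w : K, ⁅u, y⁆ * w = w * ⁅u, y⁆) : ⁅u ^ m, y⁆ = ⁅u, y⁆ ^ m := by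
  induction m with
  | zero => rw [pow_zero, pow_zero, commutator_one_left]
  | succ m ih =>
      rw [pow_succ, commutator_mul_left, ih]
      have h2 : u ^ m * ⁅u, y⁆ * (u ^ m)⁻¹ = ⁅u, y⁆ := by
        rw [← h (u ^ m)]; group
      rw [h2, ← pow_succ']

theorem ucs_descend {Q : Type*} [Group Q] (htf : Monoid.IsTorsionFree Q) {m : ℕ} (hm : 0 < m) :
    ∀ (i : ℕ) (u : Q), u ∈ Subgroup.upperCentralSeries Q (i + 1) → u ^ m ∈ Subgroup.upperCentralSeries Q i →
      u ∈ Subgroup.upperCentralSeries Q i := by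
  intro i
  induction i with
  | zero =>
      intro u _ h2
      rw [Subgroup.upperCentralSeries_zero, Subgroup.mem_bot] at h2 ⊢
      by_contra hne
      exact htf u hne (isOfFinOrder_iff_pow_eq_one.mpr ⟨m, hm, h2⟩)
  | succ i ih =>
      intro u hu1 hum
      rw [Subgroup.mem_upperCentralSeries_succ_iff]
      intro y
      set N := Subgroup.upperCentralSeries Q i with hNdef
      haveI hNn : N.Normal := by rw [hNdef]; infer_instance
      have hd1 : ⁅u, y⁆ ∈ Subgroup.upperCentralSeries Q (i + 1) := by
        rw [commutatorElement_def]
        exact Subgroup.mem_upperCentralSeries_succ_iff.mp hu1 y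
      set d := ⁅u, y⁆ with hddef
      set π := QuotientGroup.mk' N with hπdef
      have hcentral : ∀ w : Q ⧸ N, π d * w = w * π d := by
        intro w
        obtain ⟨v, rfl⟩ := QuotientGroup.mk'_surjective N w
        rw [← map_mul, ← map_mul]
        refine (QuotientGroup.mk'_eq_mk' (N := N)).mpr ⟨(d * v)⁻¹ * (v * d), ?_, by group⟩
        have h3 : d⁻¹ * v * (d⁻¹)⁻¹ * v⁻¹ ∈ N :=
          Subgroup.mem_upperCentralSeries_succ_iff.mp (inv_mem hd1) v
        have h4 := hNn.conj_mem _ h3 v⁻¹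
        have h5 : (d * v)⁻¹ * (v * d) = v⁻¹ * (d⁻¹ * v * (d⁻¹)⁻¹ * v⁻¹) * (v⁻¹)⁻¹ := by group
        rw [h5]
        exact h4
      have hπd : π d = ⁅π u, π y⁆ := by rw [hddef, map_commutatorElement]
      have hcen' : ∀ w : Q ⧸ N, ⁅π u, π y⁆ * w = w * ⁅π u, π y⁆ := by
        intro w; rw [← hπd]; exact hcentral w
      have h1 : ⁅(π u) ^ m, π y⁆ = ⁅π u, π y⁆ ^ m :=
        commutator_pow_left_of_central m hcen'
      have h2 : ⁅(π u) ^ m, π y⁆ = 1 := by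
        rw [← map_pow, ← map_commutatorElement, hπdef, QuotientGroup.mk'_apply]
        refine (QuotientGroup.eq_one_iff _).mpr ?_
        have h2b := Subgroup.mem_upperCentralSeries_succ_iff.mp hum y
        rw [commutatorElement_def]
        exact h2b
      have h6 : π (d ^ m) = 1 := by
        rw [map_pow, hπd, ← h1, h2]
      have h7 : d ^ m ∈ N := by
        rw [hπdef, QuotientGroup.mk'_apply] at h6
        exact (QuotientGroup.eq_one_iff _).mp h6
      have h8 : d ∈ N := ih d hd1 h7
      have h9 : d = u * y * u⁻¹ * y⁻¹ := commutatorElement_def u y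
      exact h8

theorem center_isolated {Q : Type*} [Group Q] [Group.IsNilpotent Q]
    (htf : Monoid.IsTorsionFree Q) {a : Q} {m : ℕ} (hm : 0 < m)
    (ha : a ^ m ∈ Subgroup.center Q) : a ∈ Subgroup.center Q := by
  have hdown : ∀ j, a ∈ Subgroup.upperCentralSeries Q (j + 1) → a ∈ Subgroup.upperCentralSeries Q 1 := by
    intro j
    induction j with
    | zero => exact id
    | succ j ih =>
        intro h
        apply ih
        apply ucs_descend htf hm (j + 1) a h
        have h1 : a ^ m ∈ Subgroup.upperCentralSeries Q 1 := by
          rw [Subgroup.upperCentralSeries_one]; exact ha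
        exact Subgroup.upperCentralSeries_mono Q (by omega) h1
  have htop : a ∈ Subgroup.upperCentralSeries Q (Group.nilpotencyClass Q + 1) := by
    have h2 := Subgroup.upperCentralSeries_nilpotencyClass (G := Q)
    exact Subgroup.upperCentralSeries_mono Q (by omega) (h2 ▸ Subgroup.mem_top a)
  have := hdown _ htop
  rwa [Subgroup.upperCentralSeries_one] at this

theorem CC_map_le {K' : Type*} [Group K'] (f : K →* K') (a : K) :
    (CC a).map f ≤ CC (f a) := by
  rw [Subgroup.map_le_iff_le_comap]
  haveI : ((CC (f a)).comap f).Normal := Subgroup.normal_comap f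
  apply Subgroup.normalClosure_le_normal
  rintro y ⟨x, rfl⟩
  exact Subgroup.mem_comap.mpr (by rw [map_commutatorElement]; exact commutator_mem_CC (f a) (f x))

theorem star_aux : ∀ (n : ℕ) (H : Type*) [Group H] [Group.IsNilpotent H],
    Group.nilpotencyClass H ≤ n → Monoid.IsTorsionFree H →
    ∀ (a : H) (m : ℕ), 0 < m →
    (∃ c ∈ CC a, ∃ z ∈ Subgroup.center H, a ^ m = c * z) → a ∈ Subgroup.center H := by
  intro n
  induction n with
  | zero =>
      intro H _ _ hcls _ a m _ _
      have hss : Subsingleton H :=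
        nilpotencyClass_zero_iff_subsingleton.mp (Nat.le_zero.mp hcls)
      exact Subgroup.mem_center_iff.mpr fun g => Subsingleton.elim _ _
  | succ n ih =>
      intro H _ _ hcls htf a m hm hhyp
      obtain ⟨c, hc, z, hz, he⟩ := hhyp
      let π := QuotientGroup.mk' (Subgroup.center H)
      have hQcls : Group.nilpotencyClass (H ⧸ Subgroup.center H) ≤ n := by
        rw [nilpotencyClass_quotient_center]; omega
      have htfQ : Monoid.IsTorsionFree (H ⧸ Subgroup.center H) := by
        intro x hx hfin
        obtain ⟨u, rfl⟩ := QuotientGroup.mk'_surjective _ x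
        obtain ⟨m', hm', hpow⟩ := isOfFinOrder_iff_pow_eq_one.mp hfin
        have hπum : QuotientGroup.mk' (Subgroup.center H) (u ^ m') = 1 := by
          rw [map_pow]; exact hpow
        rw [QuotientGroup.mk'_apply, QuotientGroup.eq_one_iff] at hπum
        have hu := center_isolated htf hm' hπum
        apply hx
        rw [QuotientGroup.mk'_apply, QuotientGroup.eq_one_iff]
        exact hu
      have hmain : π a ∈ Subgroup.center (H ⧸ Subgroup.center H) := by
        apply ih (H ⧸ Subgroup.center H) hQcls htfQ (π a) m hm
        refine ⟨π c, CC_map_le π a ⟨c, hc, rfl⟩, π z, ?_, ?_⟩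
        · apply Subgroup.mem_center_iff.mpr
          intro w
          obtain ⟨v, rfl⟩ := QuotientGroup.mk'_surjective _ w
          rw [← map_mul, ← map_mul, Subgroup.mem_center_iff.mp hz v]
        · rw [← map_pow, he, map_mul]
      have hCCcentral : CC a ≤ Subgroup.center H := by
        apply Subgroup.normalClosure_le_normal
        rintro y ⟨x, rfl⟩
        have h1 : QuotientGroup.mk' (Subgroup.center H) ⁅a, x⁆ = 1 := by
          rw [map_commutatorElement]
          exact commutatorElement_eq_one_iff_commute.mpr
            ((Subgroup.mem_center_iff.mp hmain (QuotientGroup.mk' (Subgroup.center H) x)).symm)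
        rw [QuotientGroup.mk'_apply, QuotientGroup.eq_one_iff] at h1
        exact h1
      have hcz : a ^ m ∈ Subgroup.center H := by
        rw [he]
        exact mul_mem (hCCcentral hc) hz
      exact center_isolated htf hm hcz

theorem CC_localize (a : K) {u : K} (hu : u ∈ CC a) :
    ∃ F : Finset K, ∀ (H : Subgroup K), (↑F : Set K) ⊆ ↑H → ∀ (ha : a ∈ H),
      ∃ (huH : u ∈ H), (⟨u, huH⟩ : H) ∈ CC (⟨a, ha⟩ : H) := by
  classical
  induction hu using Subgroup.closure_induction with
  | mem x hx =>
      obtain ⟨s, hs, hconj⟩ := Group.mem_conjugatesOfSet_iff.mp hx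
      obtain ⟨w, rfl⟩ := hs
      obtain ⟨t, ht⟩ := isConj_iff.mp hconj
      refine ⟨{w, t}, ?_⟩
      intro H hFH ha
      have hw : w ∈ H := hFH (by simp)
      have htH : t ∈ H := hFH (by simp)
      have hxH : x ∈ H := by
        rw [← ht, commutatorElement_def]
        exact mul_mem (mul_mem htH
          (mul_mem (mul_mem (mul_mem ha hw) (inv_mem ha)) (inv_mem hw))) (inv_mem htH)
      refine ⟨hxH, ?_⟩
      have hsub : (⟨t, htH⟩ : H) * ⁅(⟨a, ha⟩ : H), ⟨w, hw⟩⁆ * (⟨t, htH⟩ : H)⁻¹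
          = (⟨x, hxH⟩ : H) := by
        apply Subtype.ext
        simp only [commutatorElement_def, Subgroup.coe_mul, InvMemClass.coe_inv]
        rw [← ht, commutatorElement_def]
      rw [← hsub]
      exact (CC_normal _).conj_mem _ (commutator_mem_CC _ _) _
  | one =>
      refine ⟨∅, fun H _ ha => ⟨one_mem H, ?_⟩⟩
      have h1 : (⟨(1 : K), one_mem H⟩ : H) = 1 := rfl
      rw [h1]
      exact one_mem _
  | mul x y hx hy ihx ihy =>
      obtain ⟨F₁, h₁⟩ := ihx
      obtain ⟨F₂, h₂⟩ := ihy
      refine ⟨F₁ ∪ F₂, ?_⟩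
      intro H hFH ha
      have hF₁ : (↑F₁ : Set K) ⊆ ↑H := fun v hv => hFH (by simp [hv])
      have hF₂ : (↑F₂ : Set K) ⊆ ↑H := fun v hv => hFH (by simp [hv])
      obtain ⟨hxH, hmx⟩ := h₁ H hF₁ ha
      obtain ⟨hyH, hmy⟩ := h₂ H hF₂ ha
      refine ⟨mul_mem hxH hyH, ?_⟩
      have h3 : (⟨x * y, mul_mem hxH hyH⟩ : H) = ⟨x, hxH⟩ * ⟨y, hyH⟩ := rfl
      rw [h3]
      exact mul_mem hmx hmy
  | inv x hx ihx =>
      obtain ⟨F₁, h₁⟩ := ihx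
      refine ⟨F₁, ?_⟩
      intro H hFH ha
      obtain ⟨hxH, hmx⟩ := h₁ H hFH ha
      refine ⟨inv_mem hxH, ?_⟩
      have h3 : (⟨x⁻¹, inv_mem hxH⟩ : H) = (⟨x, hxH⟩ : H)⁻¹ := rfl
      rw [h3]
      exact inv_mem hmx

theorem star_global {G : Type*} [Group G] (htf : Monoid.IsTorsionFree G)
    (hln : ∀ H : Subgroup G, H.FG → Group.IsNilpotent H)
    (g : G) (n : ℕ) (hn : 0 < n) (c z : G) (hc : c ∈ CC g)
    (hz : z ∈ Subgroup.center G) (he : g ^ n = c * z) : g ∈ Subgroup.center G := by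
  classical
  rw [Subgroup.mem_center_iff]
  intro b
  obtain ⟨F, hF⟩ := CC_localize g hc
  set S : Finset G := insert g (insert b F) with hS
  set H : Subgroup G := Subgroup.closure (↑S : Set G) with hH
  have hFH : (↑F : Set G) ⊆ ↑H := fun x hx => Subgroup.subset_closure (by simp [hS, hx])
  have hgH : g ∈ H := Subgroup.subset_closure (by simp [hS])
  have hbH : b ∈ H := Subgroup.subset_closure (by simp [hS])
  obtain ⟨hcH, hmem⟩ := hF H hFH hgH
  have hzH : z ∈ H := by
    have hzeq : z = c⁻¹ * g ^ n := by rw [he]; group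
    rw [hzeq]
    exact mul_mem (inv_mem hcH) (pow_mem hgH n)
  haveI hnil : Group.IsNilpotent H := hln H ⟨S, hH.symm⟩
  have htfH : Monoid.IsTorsionFree H := by
    intro u hu hfin
    apply htf (u : G) ?_ (H.subtype.isOfFinOrder hfin)
    intro h1
    apply hu
    apply Subtype.ext
    simpa using h1
  have hstar := star_aux (Group.nilpotencyClass H) H le_rfl htfH ⟨g, hgH⟩ n hn
    ⟨⟨c, hcH⟩, hmem, ⟨z, hzH⟩, ?_, ?_⟩
  · have h4 := Subgroup.mem_center_iff.mp hstar ⟨b, hbH⟩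
    have h5 := Subtype.ext_iff.mp h4
    simpa using h5
  · apply Subgroup.mem_center_iff.mpr
    intro u
    apply Subtype.ext
    simpa using Subgroup.mem_center_iff.mp hz (u : G)
  · apply Subtype.ext
    simpa using he

theorem CC_map_eq {K' : Type*} [Group K'] (f : K →* K') (hf : Function.Surjective f) (a : K) :
    (CC a).map f = CC (f a) := by
  haveI : ((CC a).map f).Normal := Subgroup.Normal.map (CC_normal a) f hf
  apply le_antisymm (CC_map_le f a)
  apply Subgroup.normalClosure_le_normal
  rintro y ⟨x, rfl⟩
  obtain ⟨v, rfl⟩ := hf x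
  exact ⟨⁅a, v⁆, commutator_mem_CC a v, map_commutatorElement f a v⟩

end MQ
end Helpers

open MQ Subgroup

theorem magnus_quotient_centre_of_locally_nilpotent (G : Type*) [Group G]
    (htf : Monoid.IsTorsionFree G)
    (hln : ∀ H : Subgroup G, H.FG → Group.IsNilpotent H)
    (hG : MagnusProperty G) :
    MagnusProperty (G ⧸ Subgroup.center G) := by
  intro gbar hbar hN
  obtain ⟨g, rfl⟩ := QuotientGroup.mk'_surjective (Subgroup.center G) gbar
  obtain ⟨h, rfl⟩ := QuotientGroup.mk'_surjective (Subgroup.center G) hbar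
  have hsurj := QuotientGroup.mk'_surjective (Subgroup.center G)
  -- h ∈ normal closure of g in the quotient, and vice versa
  have hmem1 : QuotientGroup.mk' (Subgroup.center G) h ∈
      Subgroup.normalClosure {QuotientGroup.mk' (Subgroup.center G) g} := by
    rw [hN]; exact subset_normalClosure rfl
  have hmem2 : QuotientGroup.mk' (Subgroup.center G) g ∈
      Subgroup.normalClosure {QuotientGroup.mk' (Subgroup.center G) h} := by
    rw [← hN]; exact subset_normalClosure rfl
  obtain ⟨k, cb, hcb, hhb⟩ := mem_normalClosure_singleton hmem1
  obtain ⟨l, cb', hcb', hgb⟩ := mem_normalClosure_singleton hmem2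
  rw [← CC_map_eq _ hsurj] at hcb hcb'
  obtain ⟨c, hc, rfl⟩ := hcb
  obtain ⟨c', hc', rfl⟩ := hcb'
  -- lift the equations
  have h1 : QuotientGroup.mk' (Subgroup.center G) (g ^ k * c) =
      QuotientGroup.mk' (Subgroup.center G) h := by
    rw [map_mul, map_zpow]; exact hhb.symm
  obtain ⟨z1, hz1, hz1e⟩ := (QuotientGroup.mk'_eq_mk' _).mp h1
  have h2 : QuotientGroup.mk' (Subgroup.center G) (h ^ l * c') =
      QuotientGroup.mk' (Subgroup.center G) g := by
    rw [map_mul, map_zpow]; exact hgb.symm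
  obtain ⟨z2, hz2, hz2e⟩ := (QuotientGroup.mk'_eq_mk' _).mp h2
  have hz1c : ∀ u : G, u * z1 = z1 * u := Subgroup.mem_center_iff.mp hz1
  have hz2c : ∀ u : G, u * z2 = z2 * u := Subgroup.mem_center_iff.mp hz2
  -- CC g = CC h
  have hCChg : CC h ≤ CC g := CC_le_of_eq k hc hz1c hz1e.symm
  have hCCgh : CC g ≤ CC h := CC_le_of_eq l hc' hz2c hz2e.symm
  have hCC : CC g = CC h := le_antisymm hCCgh hCChg
  by_cases hkl : k * l = 1
  · rcases Int.mul_eq_one_iff_eq_one_or_neg_one.mp hkl with ⟨hk1, _⟩ | ⟨hk1, _⟩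
    · -- k = 1
      subst hk1
      rw [zpow_one] at hz1e
      set h' := g * c with hh'
      have he2 : h' * z1 = h := by rw [hh']; exact hz1e
      have hCCh' : CC h' = CC h := by rw [← he2]; exact (CC_shift_central h' z1 hz1c).symm
      have hch' : c ∈ CC h' := by rw [hCCh', ← hCC]; exact hc
      have hπh' : QuotientGroup.mk' (Subgroup.center G) h' =
          QuotientGroup.mk' (Subgroup.center G) h :=
        (QuotientGroup.mk'_eq_mk' _).mpr ⟨z1, hz1, he2⟩
      have hNC : Subgroup.normalClosure {g} = Subgroup.normalClosure {h'} := by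
        apply le_antisymm
        · apply Subgroup.normalClosure_le_normal
          intro x hx0
          rw [Set.mem_singleton_iff] at hx0
          rw [hx0]
          have hgeq : g = h' * c⁻¹ := by rw [hh']; group
          rw [hgeq]
          exact mul_mem (subset_normalClosure rfl)
            (CC_le_normalClosure_singleton h' (inv_mem hch'))
        · apply Subgroup.normalClosure_le_normal
          intro x hx0
          rw [Set.mem_singleton_iff] at hx0
          rw [hx0, hh']
          exact mul_mem (subset_normalClosure rfl) (CC_le_normalClosure_singleton g hc)
      rcases hG g h' hNC with hcj | hcj
      · left
        have := (QuotientGroup.mk' (Subgroup.center G)).map_isConj hcj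
        rwa [hπh'] at this
      · right
        have := (QuotientGroup.mk' (Subgroup.center G)).map_isConj hcj
        rwa [map_inv, hπh'] at this
    · -- k = -1
      subst hk1
      rw [zpow_neg_one] at hz1e
      set h' := g⁻¹ * c with hh'
      have he2 : h' * z1 = h := by rw [hh']; exact hz1e
      have hCCh' : CC h' = CC h := by rw [← he2]; exact (CC_shift_central h' z1 hz1c).symm
      have hch' : c ∈ CC h' := by rw [hCCh', ← hCC]; exact hc
      have hπh' : QuotientGroup.mk' (Subgroup.center G) h' =
          QuotientGroup.mk' (Subgroup.center G) h :=
        (QuotientGroup.mk'_eq_mk' _).mpr ⟨z1, hz1, he2⟩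
      have hNC : Subgroup.normalClosure {g} = Subgroup.normalClosure {h'} := by
        apply le_antisymm
        · apply Subgroup.normalClosure_le_normal
          intro x hx0
          rw [Set.mem_singleton_iff] at hx0
          rw [hx0]
          have hx : g⁻¹ * c * g ∈ CC h' := by
            rw [hCCh', ← hCC]
            have := (CC_normal g).conj_mem _ hc g⁻¹
            simpa using this
          have hgeq : g = h'⁻¹ * (g⁻¹ * c * g) := by rw [hh']; group
          rw [hgeq]
          exact mul_mem (inv_mem (subset_normalClosure rfl))
            (CC_le_normalClosure_singleton h' hx)
        · apply Subgroup.normalClosure_le_normal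
          intro x hx0
          rw [Set.mem_singleton_iff] at hx0
          rw [hx0, hh']
          exact mul_mem (inv_mem (subset_normalClosure rfl))
            (CC_le_normalClosure_singleton g hc)
      rcases hG g h' hNC with hcj | hcj
      · left
        have := (QuotientGroup.mk' (Subgroup.center G)).map_isConj hcj
        rwa [hπh'] at this
      · right
        have := (QuotientGroup.mk' (Subgroup.center G)).map_isConj hcj
        rwa [map_inv, hπh'] at this
  · -- k * l ≠ 1 : g is central
    obtain ⟨d, hd, hdl⟩ := pow_decomp g c k hc l
    have hcom : Commute (g ^ k * c) z1 := hz1c (g ^ k * c)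
    have hhl : h ^ l = g ^ (k * l) * d * z1 ^ l := by
      rw [← hz1e, hcom.mul_zpow, hdl]
    have hz1lc : ∀ u : G, u * z1 ^ l = z1 ^ l * u :=
      Subgroup.mem_center_iff.mp (Subgroup.zpow_mem _ hz1 l)
    have hg2 : g = g ^ (k * l) * (d * c') * (z1 ^ l * z2) := by
      calc g = h ^ l * c' * z2 := hz2e.symm
        _ = g ^ (k * l) * d * z1 ^ l * c' * z2 := by rw [hhl]
        _ = g ^ (k * l) * d * (z1 ^ l * c') * z2 := by group
        _ = g ^ (k * l) * d * (c' * z1 ^ l) * z2 := by rw [← hz1lc c']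
        _ = g ^ (k * l) * (d * c') * (z1 ^ l * z2) := by group
    have hkey : g ^ (1 - k * l) = (d * c') * (z1 ^ l * z2) := by
      have h5 : g ^ (-(k * l) : ℤ) * g = (d * c') * (z1 ^ l * z2) := by
        calc g ^ (-(k * l) : ℤ) * g
            = g ^ (-(k * l) : ℤ) * (g ^ (k * l) * (d * c') * (z1 ^ l * z2)) := by
              rw [← hg2]
          _ = (d * c') * (z1 ^ l * z2) := by group
      have h6 : g ^ (1 - k * l : ℤ) = g ^ (-(k * l) : ℤ) * g := by
        have hexp : (1 - k * l : ℤ) = -(k * l) + 1 := by ring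
        rw [hexp, zpow_add_one]
      rw [h6, h5]
    have hc2 : d * c' ∈ CC g := mul_mem hd (by rw [hCC]; exact hc')
    have hz3 : z1 ^ l * z2 ∈ Subgroup.center G :=
      mul_mem (Subgroup.zpow_mem _ hz1 l) hz2
    have hne : (1 - k * l : ℤ) ≠ 0 := sub_ne_zero.mpr fun he => hkl he.symm
    set m := (1 - k * l).natAbs with hm
    have hm0 : 0 < m := Int.natAbs_pos.mpr hne
    have hgm : ∃ c₀ ∈ CC g, ∃ z₀ ∈ Subgroup.center G, g ^ m = c₀ * z₀ := by
      rcases Int.natAbs_eq (1 - k * l) with habs | habs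
      · refine ⟨d * c', hc2, z1 ^ l * z2, hz3, ?_⟩
        rw [← zpow_natCast, hm, ← habs, hkey]
      · refine ⟨(d * c')⁻¹, inv_mem hc2, (z1 ^ l * z2)⁻¹, inv_mem hz3, ?_⟩
        have hmz : (m : ℤ) = -(1 - k * l) := by
          rw [hm]
          linarith [habs]
        rw [← zpow_natCast, hmz, zpow_neg, hkey, mul_inv_rev]
        exact (Subgroup.mem_center_iff.mp (inv_mem hz3) _).symm
    obtain ⟨c₀, hc₀, z₀, hz₀, he₀⟩ := hgm
    have hgZ : g ∈ Subgroup.center G := star_global htf hln g m hm0 c₀ z₀ hc₀ hz₀ he₀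
    have hg1 : QuotientGroup.mk' (Subgroup.center G) g = 1 := by
      rw [QuotientGroup.mk'_apply, QuotientGroup.eq_one_iff]
      exact hgZ
    have hh1 : QuotientGroup.mk' (Subgroup.center G) h = 1 := by
      have hmemh : QuotientGroup.mk' (Subgroup.center G) h ∈
          Subgroup.normalClosure {QuotientGroup.mk' (Subgroup.center G) h} :=
        subset_normalClosure rfl
      rw [← hN, hg1] at hmemh
      have hle : Subgroup.normalClosure {(1 : G ⧸ Subgroup.center G)} ≤ ⊥ :=
        Subgroup.normalClosure_le_normal (by simp)
      exact Subgroup.mem_bot.mp (hle hmemh)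
    left
    rw [hg1, hh1]
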